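/- If p is delayed-simulated by q (p ⊑_de q) in a complete Büchi automaton A, then for every word α and every level i, if both (p,i) and (q,i) are vertices of the run DAG of A over α, then rank(p,i) ≤ ⌈rank(q,i)⌉_even, where ⌈x⌉_even denotes the smallest even number ≥ x for finite x and ⌈ω⌉_even = ω. -/

import Mathlib

open scoped Classical

universe u v

/-- A (nondeterministic) Büchi automaton. -/
structure BA (A : Type u) (Q : Type v) where
  δ : Q → A → Set Q
  I : Set Q
  F : Set Q

namespace BA

variable {A : Type u} {Q : Type v}

/-- Completeness: every state has a successor on every symbol. -/
def Complete (M : BA A Q) : Prop := ∀ q a, (M.δ q a).Nonempty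

/-- `ρ` is a run of `M` over the infinite word `α` (from `ρ 0`). -/
def IsRun (M : BA A Q) (α : ℕ → A) (ρ : ℕ → Q) : Prop :=
  ∀ i, ρ (i + 1) ∈ M.δ (ρ i) (α i)

/-- `M` accepts `α` from state `q` (some run from `q` visits `F` infinitely often). -/
def AcceptsFrom (M : BA A Q) (q : Q) (α : ℕ → A) : Prop :=
  ∃ ρ, ρ 0 = q ∧ M.IsRun α ρ ∧ ∀ n, ∃ m ≥ n, ρ m ∈ M.F

def LangFrom (M : BA A Q) (q : Q) : Set (ℕ → A) := {α | M.AcceptsFrom q α}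

def Lang (M : BA A Q) : Set (ℕ → A) := {α | ∃ q ∈ M.I, M.AcceptsFrom q α}

/-! ### Simulation games -/

/-- A (positional, total) Duplicator strategy: given Duplicator's current state and
Spoiler's transition `p →a p'`, pick Duplicator's next state, which must be an
`a`-successor of Duplicator's current state. -/
def IsStrategy (M : BA A Q) (σ : Q → Q → A → Q → Q) : Prop :=
  ∀ r p a p', σ r p a p' ∈ M.δ r a

/-- The trace produced by Duplicator following strategy `σ` from `r` against
Spoiler's trace `ρ` over the word `α`. -/
def play (σ : Q → Q → A → Q → Q) (r : Q) (α : ℕ → A) (ρ : ℕ → Q) : ℕ → Q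
  | 0 => r
  | i + 1 => σ (play σ r α ρ i) (ρ i) (α i) (ρ (i + 1))

/-- Direct-simulation winning condition. -/
def CondDi (M : BA A Q) (ρ τ : ℕ → Q) : Prop := ∀ i, ρ i ∈ M.F → τ i ∈ M.F

/-- Delayed-simulation winning condition. -/
def CondDe (M : BA A Q) (ρ τ : ℕ → Q) : Prop := ∀ i, ρ i ∈ M.F → ∃ k ≥ i, τ k ∈ M.F

/-- Fair-simulation winning condition. -/
def CondF (M : BA A Q) (ρ τ : ℕ → Q) : Prop :=
  (∀ n, ∃ m ≥ n, ρ m ∈ M.F) → (∀ n, ∃ m ≥ n, τ m ∈ M.F)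

/-- `σ` is winning for Duplicator from configuration `(p, q)` wrt condition `C`. -/
def WinsFrom (M : BA A Q) (C : (ℕ → Q) → (ℕ → Q) → Prop)
    (σ : Q → Q → A → Q → Q) (p q : Q) : Prop :=
  ∀ α ρ, ρ 0 = p → M.IsRun α ρ → C ρ (play σ q α ρ)

/-- The (maximal) simulation relation given by winning condition `C`. -/
def Sim (M : BA A Q) (C : (ℕ → Q) → (ℕ → Q) → Prop) (p q : Q) : Prop :=
  ∃ σ, M.IsStrategy σ ∧ M.WinsFrom C σ p q

def DiSim (M : BA A Q) : Q → Q → Prop := M.Sim M.CondDi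
def DeSim (M : BA A Q) : Q → Q → Prop := M.Sim M.CondDe
def FairSim (M : BA A Q) : Q → Q → Prop := M.Sim M.CondF

/-! ### Run DAGs and ranks -/

/-- Vertices of the run DAG of `M` over `α`. -/
def DagV (M : BA A Q) (α : ℕ → A) : Set (Q × ℕ) :=
  {v | ∃ ρ, ρ 0 ∈ M.I ∧ M.IsRun α ρ ∧ ρ v.2 = v.1}

/-- The edge relation of the run DAG. -/
def dagStep (M : BA A Q) (α : ℕ → A) (u v : Q × ℕ) : Prop :=
  v.2 = u.2 + 1 ∧ v.1 ∈ M.δ u.1 (α u.2)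

/-- Reachability inside a sub-DAG `G`. -/
def reachIn (M : BA A Q) (α : ℕ → A) (G : Set (Q × ℕ)) : Q × ℕ → Q × ℕ → Prop :=
  Relation.ReflTransGen (fun u v => u ∈ G ∧ v ∈ G ∧ M.dagStep α u v)

/-- A vertex of `G` is finite if it reaches only finitely many vertices inside `G`. -/
def FiniteIn (M : BA A Q) (α : ℕ → A) (G : Set (Q × ℕ)) (v : Q × ℕ) : Prop :=
  v ∈ G ∧ {u | M.reachIn α G v u}.Finite

/-- A vertex of `G` is endangered if it reaches no accepting vertex inside `G`. -/
def EndangeredIn (M : BA A Q) (α : ℕ → A) (G : Set (Q × ℕ)) (v : Q × ℕ) : Prop :=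
  v ∈ G ∧ ∀ u, M.reachIn α G v u → u.1 ∉ M.F

/-- The decreasing sequence of DAGs of the ranking procedure: at even steps remove
the finite vertices, at odd steps remove the endangered vertices. -/
def dagSeq (M : BA A Q) (α : ℕ → A) : ℕ → Set (Q × ℕ)
  | 0 => M.DagV α
  | j + 1 =>
      if Even j then M.dagSeq α j \ {v | M.FiniteIn α (M.dagSeq α j) v}
      else M.dagSeq α j \ {v | M.EndangeredIn α (M.dagSeq α j) v}

/-- The rank of a vertex: the step `j ≤ 2n` at which it is removed in the ranking
procedure, and `ω` (i.e. `⊤`) if it is never removed within `2n + 1` steps. -/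
noncomputable def rank (M : BA A Q) (α : ℕ → A) (n : ℕ) (v : Q × ℕ) : ℕ∞ :=
  if ∃ j ≤ 2 * n, v ∈ M.dagSeq α j ∧ v ∉ M.dagSeq α (j + 1) then
    ((sInf {j | v ∈ M.dagSeq α j ∧ v ∉ M.dagSeq α (j + 1)} : ℕ) : ℕ∞)
  else ⊤

end BA

/-! ### Schewe's rank-based complementation -/

/-- A macrostate `(S, O, f, i)` of the rank-based construction. -/
structure Macro (Q : Type v) where
  S : Set Q
  O : Set Q
  f : Q → ℕ
  i : ℕ

/-- The rank of a level ranking `f`: its maximal value. -/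
def rankOf {Q : Type v} [Fintype Q] (f : Q → ℕ) : ℕ := Finset.univ.sup f

/-- The smallest even number `≥ k`. -/
def rondNat (k : ℕ) : ℕ := if Even k then k else k + 1

/-- The smallest even number `≥ x`, with `⌈ω⌉ = ω`. -/
def rondE (x : ℕ∞) : ℕ∞ := WithTop.map rondNat x

namespace BA

variable {A : Type u} {Q : Type v}

/-- A level ranking: ranks bounded by `2n`, accepting states get even ranks. -/
def LevelRanking (M : BA A Q) (n : ℕ) (f : Q → ℕ) : Prop :=
  (∀ q, f q ≤ 2 * n) ∧ ∀ q ∈ M.F, Even (f q)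

/-- `f` is `S`-tight. -/
def STight [Fintype Q] (M : BA A Q) (n : ℕ) (S : Set Q) (f : Q → ℕ) : Prop :=
  M.LevelRanking n f ∧ Odd (rankOf f) ∧
  (∀ m, Odd m → m ≤ rankOf f → ∃ s ∈ S, f s = m) ∧
  ∀ q ∉ S, f q = 0

/-- Successors of a set of states. -/
def δSet (M : BA A Q) (S : Set Q) (a : A) : Set Q := ⋃ q ∈ S, M.δ q a

/-- Validity of a macrostate, i.e., membership in `Q₂`. -/
def Q2Valid [Fintype Q] (M : BA A Q) (n : ℕ) (m : Macro Q) : Prop :=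
  M.STight n m.S m.f ∧ m.O ⊆ m.S ∩ {q | m.f q = m.i} ∧ Even m.i ∧ m.i + 2 ≤ 2 * n

/-- The `δ₃` successor condition of the rank-based construction, where `cl` is the
closure operator applied to the successor set (use `cl = id` for the plain
construction). -/
def macroSucc [Fintype Q] (M : BA A Q) (cl : Set Q → Set Q) (m m' : Macro Q)
    (a : A) : Prop :=
  m'.S = cl (M.δSet m.S a) ∧
  (∀ q ∈ m.S, ∀ q' ∈ M.δ q a, m'.f q' ≤ m.f q) ∧
  rankOf m'.f = rankOf m.f ∧
  ((m.O = ∅ ∧ m'.i = (m.i + 2) % (rankOf m'.f + 1) ∧ m'.O = {q | m'.f q = m'.i}) ∨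
   (m.O ≠ ∅ ∧ m'.i = m.i ∧ m'.O = M.δSet m.O a ∩ {q | m'.f q = m'.i}))

/-- Schewe's rank-based complement construction, parameterized by a predicate
`keep` selecting which macrostates of `Q₂` are kept (use `fun _ => True` for the
plain construction) and a closure `cl` applied to successor sets (use `id` for
the plain construction). -/
def schewe [Fintype Q] (M : BA A Q) (n : ℕ) (keep : Macro Q → Prop)
    (cl : Set Q → Set Q) : BA A (Set Q ⊕ Macro Q) where
  δ := fun s a =>
    match s with
    | Sum.inl S =>
        {Sum.inl (cl (M.δSet S a))} ∪
        {s' | ∃ m : Macro Q, s' = Sum.inr m ∧ m.S = cl (M.δSet S a) ∧ m.O = ∅ ∧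
              m.i = 0 ∧ M.Q2Valid n m ∧ keep m}
    | Sum.inr m =>
        {s' | ∃ m' : Macro Q, s' = Sum.inr m' ∧ M.macroSucc cl m m' a ∧
              M.Q2Valid n m' ∧ keep m'}
  I := {Sum.inl M.I}
  F := {Sum.inl (∅ : Set Q)} ∪
       {s | ∃ m : Macro Q, s = Sum.inr m ∧ m.O = ∅ ∧ M.Q2Valid n m ∧ keep m}

/-! ### Finite paths, quotients, added transitions -/

/-- Finite path from `p` to `q` over the finite word `w`. -/
inductive Path (M : BA A Q) : Q → List A → Q → Prop
  | nil (q : Q) : Path M q [] q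
  | cons {p q r : Q} {a : A} {w : List A} :
      q ∈ M.δ p a → Path M q w r → Path M p (a :: w) r

/-- Finite path from `p` to `q` over `w` that visits an accepting state. -/
inductive APath (M : BA A Q) : Q → List A → Q → Prop
  | here {p : Q} {w : List A} {q : Q} : p ∈ M.F → Path M p w q → APath M p w q
  | step {p q r : Q} {a : A} {w : List A} :
      q ∈ M.δ p a → APath M q w r → APath M p (a :: w) r

/-- The factor of the infinite word `α` between positions `i` (included) and
`j` (excluded). -/
def wordSeg (α : ℕ → A) (i j : ℕ) : List A := (List.range (j - i)).map fun m => α (i + m)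

/-- `α` belongs to the ω-power `L^ω` of the language `L` of finite words. -/
def InOmegaPow (L : Language A) (α : ℕ → A) : Prop :=
  ∃ t : ℕ → ℕ, t 0 = 0 ∧ StrictMono t ∧ ∀ k, wordSeg α (t k) (t (k + 1)) ∈ L

/-- The automaton `M` with the extra transition `r →a p` added. -/
def addTr (M : BA A Q) (r : Q) (a : A) (p : Q) : BA A Q where
  δ := fun s b => M.δ s b ∪ {x | s = r ∧ b = a ∧ x = p}
  I := M.I
  F := M.F

/-- The quotient automaton of `M` by the equivalence (setoid) `s`. -/
def quotBA (M : BA A Q) (s : Setoid Q) : BA A (Quotient s) where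
  δ := fun c a => {c' | ∃ u u', Quotient.mk s u = c ∧ Quotient.mk s u' = c' ∧ u' ∈ M.δ u a}
  I := {c | ∃ u ∈ M.I, Quotient.mk s u = c}
  F := {c | ∃ u ∈ M.F, Quotient.mk s u = c}

end BA

/-! ### Auxiliary lemmas for stmt4 -/

namespace BA

variable {A : Type u} {Q : Type v}

lemma dagSeq_zero (M : BA A Q) (α : ℕ → A) : M.dagSeq α 0 = M.DagV α := rfl

lemma mem_dagSeq_succ_even (M : BA A Q) (α : ℕ → A) {j : ℕ} (hj : Even j)
    {v : Q × ℕ} :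
    v ∈ M.dagSeq α (j + 1) ↔
      v ∈ M.dagSeq α j ∧ ¬ M.FiniteIn α (M.dagSeq α j) v := by
  simp [dagSeq, hj]

lemma mem_dagSeq_succ_odd (M : BA A Q) (α : ℕ → A) {j : ℕ} (hj : ¬ Even j)
    {v : Q × ℕ} :
    v ∈ M.dagSeq α (j + 1) ↔
      v ∈ M.dagSeq α j ∧ ¬ M.EndangeredIn α (M.dagSeq α j) v := by
  simp [dagSeq, hj]

lemma dagSeq_succ_subset (M : BA A Q) (α : ℕ → A) (j : ℕ) :
    M.dagSeq α (j + 1) ⊆ M.dagSeq α j := by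
  by_cases h : Even j
  · intro v hv; exact ((M.mem_dagSeq_succ_even α h).mp hv).1
  · intro v hv; exact ((M.mem_dagSeq_succ_odd α h).mp hv).1

lemma dagSeq_antitone (M : BA A Q) (α : ℕ → A) {j j' : ℕ} (h : j ≤ j') :
    M.dagSeq α j' ⊆ M.dagSeq α j := by
  induction h with
  | refl => exact le_rfl
  | step _ ih => exact fun v hv => ih (M.dagSeq_succ_subset α _ hv)

lemma play_congr (σ : Q → Q → A → Q → Q) (r : Q) {α α' : ℕ → A} {ρ ρ' : ℕ → Q}
    (j : ℕ) (hα : ∀ m < j, α m = α' m) (hρ : ∀ m ≤ j, ρ m = ρ' m) :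
    play σ r α ρ j = play σ r α' ρ' j := by
  induction j with
  | zero => rfl
  | succ j ih =>
    simp only [play]
    rw [ih (fun m hm => hα m (hm.trans (Nat.lt_succ_self j)))
        (fun m hm => hρ m (hm.trans (Nat.le_succ j))),
      hα j (Nat.lt_succ_self j), hρ j (Nat.le_succ j), hρ (j + 1) le_rfl]

/-- The positional strategy `σ` remains winning for the delayed condition along a play. -/
lemma winsFrom_shift (M : BA A Q) {σ : Q → Q → A → Q → Q}
    {p q : Q} (hw : M.WinsFrom M.CondDe σ p q)
    (α : ℕ → A) (ρ : ℕ → Q) (h0 : ρ 0 = p) (hρ : M.IsRun α ρ) (j : ℕ) :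
    M.WinsFrom M.CondDe σ (ρ j) (play σ q α ρ j) := by
  intro β ρ' h0' hρ' i hF
  classical
  set fα : ℕ → A := fun m => if m < j then α m else β (m - j) with hfα
  set fρ : ℕ → Q := fun m => if m < j then ρ m else ρ' (m - j) with hfρ
  have hfρ_eq : ∀ m ≤ j, fρ m = ρ m := by
    intro m hm
    rcases lt_or_eq_of_le hm with hm' | hm'
    · simp [hfρ, hm']
    · subst hm'; simp [hfρ, h0']
  have hfρ_ge : ∀ m, j ≤ m → fρ m = ρ' (m - j) := by
    intro m hm
    rcases lt_or_eq_of_le hm with hm' | hm'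
    · simp [hfρ, Nat.not_lt.mpr hm'.le]
    · subst hm'; simp [hfρ, h0']
  have hfρ0 : fρ 0 = p := by rw [hfρ_eq 0 (Nat.zero_le j), h0]
  have hfrun : M.IsRun fα fρ := by
    intro m
    rcases lt_or_ge m j with hm | hm
    · have e1 : fρ (m + 1) = ρ (m + 1) := hfρ_eq _ (Nat.succ_le_of_lt hm)
      have e2 : fρ m = ρ m := hfρ_eq _ hm.le
      have e3 : fα m = α m := by simp [hfα, hm]
      rw [e1, e2, e3]; exact hρ m
    · have e1 : fρ (m + 1) = ρ' (m + 1 - j) := hfρ_ge _ (hm.trans (Nat.le_succ m))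
      have e2 : fρ m = ρ' (m - j) := hfρ_ge _ hm
      have e3 : fα m = β (m - j) := by simp [hfα, Nat.not_lt.mpr hm]
      rw [e1, e2, e3, Nat.sub_add_comm hm]
      exact hρ' (m - j)
  have key : ∀ m, play σ q fα fρ (j + m) = play σ (play σ q α ρ j) β ρ' m := by
    intro m
    induction m with
    | zero =>
      show play σ q fα fρ j = play σ q α ρ j
      exact play_congr σ q j (fun m hm => by simp [hfα, hm])
        (fun m hm => hfρ_eq m hm)
    | succ m ihm =>
      have e : j + (m + 1) = (j + m) + 1 := rfl
      rw [e]
      simp only [play]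
      rw [ihm, hfρ_ge (j + m) (Nat.le_add_right j m),
        hfρ_ge (j + m + 1) (by omega), Nat.add_sub_cancel_left]
      have e1 : fα (j + m) = β m := by simp [hfα]
      have e2 : j + m + 1 - j = m + 1 := by omega
      rw [e1, e2]
  have hcond := hw fα fρ hfρ0 hfrun
  have hFi : fρ (j + i) ∈ M.F := by
    rw [hfρ_ge (j + i) (Nat.le_add_right j i), Nat.add_sub_cancel_left]; exact hF
  obtain ⟨k, hk, hkF⟩ := hcond (j + i) hFi
  refine ⟨k - j, by omega, ?_⟩
  have : k = j + (k - j) := by omega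
  rw [← key (k - j), ← this]
  exact hkF

/-- Following a run forward in the DAG stays in the DAG. -/
lemma dagV_extend (M : BA A Q) (α : ℕ → A) {q : Q} {i : ℕ}
    (hq : (q, i) ∈ M.DagV α) (τ : ℕ → Q) (h0 : τ 0 = q)
    (hτ : ∀ m, τ (m + 1) ∈ M.δ (τ m) (α (i + m))) :
    ∀ m, (τ m, i + m) ∈ M.DagV α := by
  classical
  obtain ⟨ρw, hI, hrun, hqi⟩ := hq
  intro m
  refine ⟨fun t => if t ≤ i then ρw t else τ (t - i), by simp [hI], ?_, ?_⟩
  · intro t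
    by_cases ht : t + 1 ≤ i
    · simp only [if_pos (by omega : t ≤ i), if_pos ht]
      exact hrun t
    · by_cases ht2 : t ≤ i
      · have hti : t = i := by omega
        simp only [if_pos ht2, if_neg ht]
        have h1 := hτ 0
        rw [h0] at h1
        have e : t + 1 - i = 1 := by omega
        rw [e, hti, hqi]
        simpa using h1
      · simp only [if_neg ht2, if_neg (by omega : ¬ t + 1 ≤ i)]
        have e : t + 1 - i = (t - i - 1) + 1 + 1 := by omega
        have e2 : t - i = (t - i - 1) + 1 := by omega
        rw [e, e2]
        have := hτ ((t - i - 1) + 1)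
        have e3 : i + (t - i - 1 + 1) = t := by omega
        rwa [e3] at this
  · show (fun t => if t ≤ i then ρw t else τ (t - i)) (i + m) = τ m
    rcases Nat.eq_zero_or_pos m with hm | hm
    · subst hm; simp [hqi, h0]
    · simp only [if_neg (by omega : ¬ i + m ≤ i), Nat.add_sub_cancel_left]

lemma reach_chain (M : BA A Q) (α : ℕ → A) (G : Set (Q × ℕ)) {i : ℕ} {τ : ℕ → Q}
    (hG : ∀ m, (τ m, i + m) ∈ G)
    (hτ : ∀ m, τ (m + 1) ∈ M.δ (τ m) (α (i + m))) :
    ∀ m, M.reachIn α G (τ 0, i) (τ m, i + m) := by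
  intro m
  induction m with
  | zero => exact Relation.ReflTransGen.refl
  | succ m ih =>
    exact ih.tail ⟨hG m, hG (m + 1), rfl, hτ m⟩

lemma infinite_reach (M : BA A Q) (α : ℕ → A) (G : Set (Q × ℕ)) {i : ℕ} {τ : ℕ → Q}
    (hG : ∀ m, (τ m, i + m) ∈ G)
    (hτ : ∀ m, τ (m + 1) ∈ M.δ (τ m) (α (i + m))) :
    {u | M.reachIn α G (τ 0, i) u}.Infinite := by
  have hinj : Function.Injective (fun m : ℕ => (τ m, i + m)) := by
    intro a b hab
    have := congrArg Prod.snd hab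
    simpa using this
  exact Set.infinite_of_injective_forall_mem hinj (fun m => M.reach_chain α G hG hτ m)

/-- Every vertex surviving a "finite removal" step has a successor that survives it. -/
lemma succ_mem (M : BA A Q) [Fintype Q] (α : ℕ → A) {j : ℕ} (hj : Even j)
    {v : Q × ℕ} (hv : v ∈ M.dagSeq α (j + 1)) :
    ∃ u, M.dagStep α v u ∧ u ∈ M.dagSeq α (j + 1) := by
  classical
  rw [M.mem_dagSeq_succ_even α hj] at hv
  obtain ⟨hvj, hnf⟩ := hv
  have hinf : {u | M.reachIn α (M.dagSeq α j) v u}.Infinite :=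
    fun hfin => hnf ⟨hvj, hfin⟩
  by_contra hcon
  push_neg at hcon
  have hfin : ∀ u ∈ {u | M.dagStep α v u ∧ u ∈ M.dagSeq α j},
      {x | M.reachIn α (M.dagSeq α j) u x}.Finite := by
    intro u hu
    by_contra hfin0
    exact hcon u hu.1 ((M.mem_dagSeq_succ_even α hj).mpr
      ⟨hu.2, fun hF => hfin0 hF.2⟩)
  have hTfin : {u | M.dagStep α v u ∧ u ∈ M.dagSeq α j}.Finite := by
    apply Set.Finite.subset (Set.finite_range (fun q : Q => (q, v.2 + 1)))
    rintro ⟨x1, x2⟩ ⟨hstep, -⟩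
    refine ⟨x1, ?_⟩
    show (x1, v.2 + 1) = (x1, x2)
    rw [show x2 = v.2 + 1 from hstep.1]
  have hsub : {u | M.reachIn α (M.dagSeq α j) v u} ⊆
      {v} ∪ ⋃ u ∈ {u | M.dagStep α v u ∧ u ∈ M.dagSeq α j},
        {x | M.reachIn α (M.dagSeq α j) u x} := by
    intro x hx
    rcases Relation.ReflTransGen.cases_head hx with h | ⟨b, ⟨_, hbG, hstep⟩, htail⟩
    · left; simp [h]
    · right; exact Set.mem_biUnion (show _ ∈ {u | M.dagStep α v u ∧ _} from ⟨hstep, hbG⟩) htail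
  exact hinf (Set.Finite.subset ((Set.finite_singleton v).union (hTfin.biUnion hfin)) hsub)

/-- An infinite path inside `dagSeq (j+1)` from any of its vertices, for even `j`. -/
lemma exists_path (M : BA A Q) [Fintype Q] (α : ℕ → A) {j : ℕ} (hj : Even j)
    {v : Q × ℕ} (hv : v ∈ M.dagSeq α (j + 1)) :
    ∃ τ : ℕ → Q, τ 0 = v.1 ∧ (∀ m, (τ m, v.2 + m) ∈ M.dagSeq α (j + 1)) ∧
      ∀ m, τ (m + 1) ∈ M.δ (τ m) (α (v.2 + m)) := by
  classical
  have hstep : ∀ w ∈ M.dagSeq α (j + 1),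
      ∃ u, M.dagStep α w u ∧ u ∈ M.dagSeq α (j + 1) :=
    fun w hw => M.succ_mem α hj hw
  set next : Q × ℕ → Q × ℕ := fun w =>
    if h : w ∈ M.dagSeq α (j + 1) then (hstep w h).choose else w with hnext
  set f : ℕ → Q × ℕ := fun m => next^[m] v with hf
  have key : ∀ m, f m ∈ M.dagSeq α (j + 1) ∧ (f m).2 = v.2 + m := by
    intro m
    induction m with
    | zero => exact ⟨hv, rfl⟩
    | succ m ihm =>
      have e : f (m + 1) = next (f m) := Function.iterate_succ_apply' next m v
      have hd : next (f m) = (hstep (f m) ihm.1).choose := dif_pos ihm.1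
      have spec := (hstep (f m) ihm.1).choose_spec
      rw [e, hd]
      exact ⟨spec.2, by rw [spec.1.1, ihm.2]; omega⟩
  have stp : ∀ m, M.dagStep α (f m) (f (m + 1)) := by
    intro m
    have e : f (m + 1) = next (f m) := Function.iterate_succ_apply' next m v
    have hd : next (f m) = (hstep (f m) (key m).1).choose := dif_pos (key m).1
    have spec := (hstep (f m) (key m).1).choose_spec
    rw [e, hd]
    exact spec.1
  refine ⟨fun m => (f m).1, rfl, ?_, ?_⟩
  · intro m
    have h2 : ((f m).1, v.2 + m) = f m := by
      rw [← (key m).2]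
    rw [h2]; exact (key m).1
  · intro m
    have := (stp m).2
    rwa [(key m).2] at this

/-- Converting a reachability witness into a finite run segment. -/
lemma reach_to_run (M : BA A Q) (α : ℕ → A) (G : Set (Q × ℕ)) {v u : Q × ℕ}
    (hvG : v ∈ G) (h : M.reachIn α G v u) :
    ∃ L, ∃ g : ℕ → Q, g 0 = v.1 ∧ g L = u.1 ∧ u.2 = v.2 + L ∧
      (∀ m ≤ L, (g m, v.2 + m) ∈ G) ∧
      (∀ m < L, g (m + 1) ∈ M.δ (g m) (α (v.2 + m))) := by
  classical
  induction h with
  | refl =>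
    refine ⟨0, fun _ => v.1, rfl, rfl, by simp, ?_, fun m hm => absurd hm (Nat.not_lt_zero m)⟩
    intro m hm
    interval_cases m
    simpa using hvG
  | @tail b c _ hstep ihh =>
    obtain ⟨L, g, hg0, hgL, hlvl, hmem, hstp⟩ := ihh
    obtain ⟨hbG, hcG, hdc⟩ := hstep
    have hc2 : c.2 = v.2 + (L + 1) := by rw [hdc.1, hlvl]; omega
    refine ⟨L + 1, fun m => if m = L + 1 then c.1 else g m,
      by simp [hg0], by simp, hc2, ?_, ?_⟩
    · intro m hm
      rcases eq_or_lt_of_le hm with hm' | hm'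
      · show (if m = L + 1 then c.1 else g m, v.2 + m) ∈ G
        rw [if_pos hm']
        have e : (c.1, v.2 + m) = c := by
          refine Prod.ext rfl ?_
          rw [hc2, hm']
        rw [e]; exact hcG
      · have hm2 : m ≤ L := by omega
        show (if m = L + 1 then c.1 else g m, v.2 + m) ∈ G
        rw [if_neg (by omega : m ≠ L + 1)]
        exact hmem m hm2
    · intro m hm
      show (if m + 1 = L + 1 then c.1 else g (m + 1)) ∈
        M.δ (if m = L + 1 then c.1 else g m) (α (v.2 + m))
      rcases eq_or_lt_of_le (Nat.lt_succ_iff.mp hm) with hm' | hm'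
      · rw [if_pos (by omega : m + 1 = L + 1), if_neg (by omega : m ≠ L + 1)]
        have h2 := hdc.2
        rw [← hgL, hlvl] at h2
        rwa [hm']
      · rw [if_neg (by omega : m + 1 ≠ L + 1), if_neg (by omega : m ≠ L + 1)]
        exact hstp m hm'

/-- From a non-endangered vertex (of an odd-stage DAG): an infinite run inside the DAG
visiting an accepting state. -/
lemma not_endangered_run (M : BA A Q) [Fintype Q] (α : ℕ → A) {j : ℕ} (hj : Even j)
    {v : Q × ℕ} (hvG : v ∈ M.dagSeq α (j + 1)) {u : Q × ℕ}
    (hreach : M.reachIn α (M.dagSeq α (j + 1)) v u) (huF : u.1 ∈ M.F) :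
    ∃ τ : ℕ → Q, τ 0 = v.1 ∧ (∀ m, (τ m, v.2 + m) ∈ M.dagSeq α (j + 1)) ∧
      (∀ m, τ (m + 1) ∈ M.δ (τ m) (α (v.2 + m))) ∧ ∃ L, τ L ∈ M.F := by
  classical
  obtain ⟨L, g, hg0, hgL, hlvl, hmem, hstp⟩ := M.reach_to_run α _ hvG hreach
  have huG : u ∈ M.dagSeq α (j + 1) := by
    have := hmem L le_rfl
    have e : (g L, v.2 + L) = u := Prod.ext hgL hlvl.symm
    rwa [e] at this
  obtain ⟨τu, hτu0, hτumem, hτustep⟩ := M.exists_path α hj huG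
  refine ⟨fun m => if m < L then g m else τu (m - L), ?_, ?_, ?_, ⟨L, ?_⟩⟩
  · show (if 0 < L then g 0 else τu (0 - L)) = v.1
    rcases Nat.eq_zero_or_pos L with hL | hL
    · subst hL
      rw [if_neg (lt_irrefl 0)]
      show τu 0 = v.1
      rw [hτu0, ← hgL]
      exact hg0
    · rw [if_pos hL]; exact hg0
  · intro m
    show (if m < L then g m else τu (m - L), v.2 + m) ∈ M.dagSeq α (j + 1)
    rcases lt_or_ge m L with hm | hm
    · rw [if_pos hm]; exact hmem m hm.le
    · rw [if_neg (Nat.not_lt.mpr hm)]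
      have h2 := hτumem (m - L)
      have e : u.2 + (m - L) = v.2 + m := by omega
      rwa [e] at h2
  · intro m
    show (if m + 1 < L then g (m + 1) else τu (m + 1 - L)) ∈
      M.δ (if m < L then g m else τu (m - L)) (α (v.2 + m))
    rcases lt_or_ge (m + 1) L with hm | hm
    · rw [if_pos hm, if_pos (by omega : m < L)]
      exact hstp m (by omega)
    · rcases eq_or_lt_of_le hm with hm' | hm'
      · -- m + 1 = L
        rw [if_neg (by omega : ¬ m + 1 < L), if_pos (by omega : m < L)]
        have e : m + 1 - L = 0 := by omega
        rw [e, hτu0, ← hgL, hm']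
        exact hstp m (by omega)
      · -- m ≥ L
        rw [if_neg (by omega : ¬ m + 1 < L), if_neg (by omega : ¬ m < L)]
        have e : m + 1 - L = (m - L) + 1 := by omega
        rw [e]
        have h2 := hτustep (m - L)
        have e2 : u.2 + (m - L) = v.2 + m := by omega
        rwa [e2] at h2
  · show (if L < L then g L else τu (L - L)) ∈ M.F
    rw [if_neg (lt_irrefl L), Nat.sub_self, hτu0]
    exact huF

/-- Key lemma: delayed simulation implies survival in the ranking procedure. -/
lemma main_lemma (M : BA A Q) [Fintype Q] (α : ℕ → A) :
    ∀ (k : ℕ) (p q : Q) (i : ℕ), M.DeSim p q → (q, i) ∈ M.DagV α →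
      (p, i) ∈ M.dagSeq α (2 * k + 1) → (q, i) ∈ M.dagSeq α (2 * k + 1) := by
  intro k
  induction k with
  | zero =>
    intro p q i _ hq _
    have h0 : (2 : ℕ) * 0 + 1 = 0 + 1 := by norm_num
    rw [h0, M.mem_dagSeq_succ_even α Even.zero]
    rw [M.dagSeq_zero α]
    refine ⟨hq, ?_⟩
    intro hFin
    obtain ⟨ρw, hI, hrun, hqi⟩ := hq
    have hinf := M.infinite_reach α (M.DagV α) (τ := fun m => ρw (i + m)) (i := i)
      (fun m => ⟨ρw, hI, hrun, rfl⟩) (fun m => hrun (i + m))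
    have e : ((fun m => ρw (i + m)) 0, i) = (q, i) := by
      simp only []
      rw [show i + 0 = i from rfl, hqi]
    rw [e] at hinf
    exact hinf hFin.2
  | succ k ih =>
    intro p q i hsim hq hp
    -- SUB1 : survival at stage 2k+2
    have sub1 : ∀ (p' q' : Q) (i' : ℕ), M.DeSim p' q' → (q', i') ∈ M.DagV α →
        (p', i') ∈ M.dagSeq α (2 * k + 1 + 1) → (q', i') ∈ M.dagSeq α (2 * k + 1 + 1) := by
      intro p' q' i' hsim' hq' hp'
      have hodd : ¬ Even (2 * k + 1) := by
        simp [Nat.even_add_one, parity_simps]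
      rw [M.mem_dagSeq_succ_odd α hodd] at hp' ⊢
      obtain ⟨hp'1, hp'2⟩ := hp'
      have hq'1 : (q', i') ∈ M.dagSeq α (2 * k + 1) := ih p' q' i' hsim' hq' hp'1
      refine ⟨hq'1, ?_⟩
      intro hend
      -- p' is not endangered: find an accepting vertex reachable from it
      have hex : ∃ u, M.reachIn α (M.dagSeq α (2 * k + 1)) (p', i') u ∧ u.1 ∈ M.F := by
        by_contra hcon
        push_neg at hcon
        exact hp'2 ⟨hp'1, fun u hu => hcon u hu⟩
      obtain ⟨u, hu_reach, hu_F⟩ := hex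
      have hevk : Even (2 * k) := even_two_mul k
      obtain ⟨ρ1, hρ10, hρ1mem, hρ1step, L, hL⟩ :=
        M.not_endangered_run α hevk hp'1 hu_reach hu_F
      obtain ⟨σ', hσ', hw'⟩ := hsim'
      have hrunβ : M.IsRun (fun m => α (i' + m)) ρ1 := fun m => hρ1step m
      have hcond := hw' (fun m => α (i' + m)) ρ1 hρ10 hrunβ
      obtain ⟨k', hk'L, hk'F⟩ := hcond L hL
      have hτ'step : ∀ m, play σ' q' (fun m => α (i' + m)) ρ1 (m + 1) ∈
          M.δ (play σ' q' (fun m => α (i' + m)) ρ1 m) (α (i' + m)) :=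
        fun m => hσ' _ _ _ _
      have hτ'D : ∀ m, (play σ' q' (fun m => α (i' + m)) ρ1 m, i' + m) ∈ M.DagV α :=
        M.dagV_extend α hq' _ rfl hτ'step
      have hτ'sim : ∀ m, M.DeSim (ρ1 m) (play σ' q' (fun m => α (i' + m)) ρ1 m) :=
        fun m => ⟨σ', hσ', M.winsFrom_shift hw' _ ρ1 hρ10 hrunβ m⟩
      have hτ'mem : ∀ m, (play σ' q' (fun m => α (i' + m)) ρ1 m, i' + m) ∈
          M.dagSeq α (2 * k + 1) :=
        fun m => ih (ρ1 m) _ (i' + m) (hτ'sim m) (hτ'D m) (hρ1mem m)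
      exact hend.2 _ (M.reach_chain α _ hτ'mem hτ'step k') hk'F
    -- main part
    have h3 : 2 * (k + 1) + 1 = 2 * k + 1 + 1 + 1 := by ring
    rw [h3] at hp ⊢
    have hEven : Even (2 * k + 1 + 1) := by
      simp [Nat.even_add_one, parity_simps]
    rw [M.mem_dagSeq_succ_even α hEven] at hp ⊢
    obtain ⟨ρs, hρs0, hρsmem, hρsstep⟩ := M.exists_path α hEven ((M.mem_dagSeq_succ_even α hEven).mpr hp)
    have hρsmem2 : ∀ m, (ρs m, i + m) ∈ M.dagSeq α (2 * k + 1 + 1) :=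
      fun m => M.dagSeq_succ_subset α _ (hρsmem m)
    obtain ⟨σ, hσ, hw⟩ := hsim
    have hrunβ : M.IsRun (fun m => α (i + m)) ρs := fun m => hρsstep m
    have hτstep : ∀ m, play σ q (fun m => α (i + m)) ρs (m + 1) ∈
        M.δ (play σ q (fun m => α (i + m)) ρs m) (α (i + m)) :=
      fun m => hσ _ _ _ _
    have hτD : ∀ m, (play σ q (fun m => α (i + m)) ρs m, i + m) ∈ M.DagV α :=
      M.dagV_extend α hq _ rfl hτstep
    have hτsim : ∀ m, M.DeSim (ρs m) (play σ q (fun m => α (i + m)) ρs m) :=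
      fun m => ⟨σ, hσ, M.winsFrom_shift hw _ ρs hρs0 hrunβ m⟩
    have hτmem : ∀ m, (play σ q (fun m => α (i + m)) ρs m, i + m) ∈
        M.dagSeq α (2 * k + 1 + 1) :=
      fun m => sub1 (ρs m) _ (i + m) (hτsim m) (hτD m) (hρsmem2 m)
    refine ⟨hτmem 0, ?_⟩
    intro hFin
    have hinf := M.infinite_reach α (M.dagSeq α (2 * k + 1 + 1)) hτmem hτstep
    exact hinf hFin.2

/-- Locating the removal step of a vertex that is eventually removed. -/
lemma exists_drop (M : BA A Q) (α : ℕ → A) {v : Q × ℕ} (hv : v ∈ M.dagSeq α 0)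
    {m : ℕ} (hnot : v ∉ M.dagSeq α (m + 1)) :
    ∃ j ≤ m, v ∈ M.dagSeq α j ∧ v ∉ M.dagSeq α (j + 1) := by
  induction m with
  | zero => exact ⟨0, le_rfl, hv, hnot⟩
  | succ m ihm =>
    by_cases hm : v ∈ M.dagSeq α (m + 1)
    · exact ⟨m + 1, le_rfl, hm, hnot⟩
    · obtain ⟨j, hj, h1, h2⟩ := ihm hm
      exact ⟨j, hj.trans (Nat.le_succ m), h1, h2⟩

end BA

/-- delayed simulation implies `rank(p,i) ≤ ⌈rank(q,i)⌉_even`. -/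
theorem stmt4 {A : Type u} {Q : Type v} [Fintype Q] (M : BA A Q)
    (hM : M.Complete) (n : ℕ) (hn : n = Fintype.card Q)
    (p q : Q) (h : M.DeSim p q) :
    ∀ (α : ℕ → A) (i : ℕ), (p, i) ∈ M.DagV α → (q, i) ∈ M.DagV α →
      M.rank α n (p, i) ≤ rondE (M.rank α n (q, i)) := by
  intro α i hpD hqD
  classical
  by_cases hqc : ∃ j ≤ 2 * n, (q, i) ∈ M.dagSeq α j ∧ (q, i) ∉ M.dagSeq α (j + 1)
  · obtain ⟨j₀, hj₀n, hj₀⟩ := hqc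
    have hSne : {j | (q, i) ∈ M.dagSeq α j ∧ (q, i) ∉ M.dagSeq α (j + 1)}.Nonempty :=
      ⟨j₀, hj₀⟩
    set r := sInf {j | (q, i) ∈ M.dagSeq α j ∧ (q, i) ∉ M.dagSeq α (j + 1)} with hr
    have hrmem : r ∈ {j | (q, i) ∈ M.dagSeq α j ∧ (q, i) ∉ M.dagSeq α (j + 1)} :=
      Nat.sInf_mem hSne
    have hr_le : r ≤ 2 * n := le_trans (Nat.sInf_le hj₀) hj₀n
    have hrankq : M.rank α n (q, i) = (r : ℕ∞) := by
      rw [BA.rank, if_pos ⟨j₀, hj₀n, hj₀⟩]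
    set m := rondNat r with hmdef
    have hm_even : Even m := by
      rw [hmdef, rondNat]
      split
      · assumption
      · rename_i hodd
        rcases Nat.even_or_odd r with h' | h'
        · exact absurd h' hodd
        · exact h'.add_one
    have hm_ge : r ≤ m := by
      rw [hmdef, rondNat]; split <;> omega
    have hm_le : m ≤ 2 * n := by
      rw [hmdef, rondNat]
      split
      · exact hr_le
      · rename_i hodd
        have : r ≠ 2 * n := by
          intro h'
          exact hodd (h' ▸ even_two_mul n)
        omega
    have hqnot : (q, i) ∉ M.dagSeq α (m + 1) := fun hh =>
      hrmem.2 (M.dagSeq_antitone α (by omega) hh)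
    obtain ⟨kk, hkk⟩ := hm_even
    have hpnot : (p, i) ∉ M.dagSeq α (m + 1) := by
      intro hpmem
      apply hqnot
      have e : m + 1 = 2 * kk + 1 := by omega
      rw [e] at hpmem ⊢
      exact M.main_lemma α kk p q i h hqD hpmem
    have hp0 : (p, i) ∈ M.dagSeq α 0 := by rw [M.dagSeq_zero α]; exact hpD
    obtain ⟨j', hj'm, hj'1, hj'2⟩ := M.exists_drop α hp0 hpnot
    have hrankp : M.rank α n (p, i) =
        ((sInf {j | (p, i) ∈ M.dagSeq α j ∧ (p, i) ∉ M.dagSeq α (j + 1)} : ℕ) : ℕ∞) := by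
      rw [BA.rank, if_pos ⟨j', by omega, hj'1, hj'2⟩]
    rw [hrankp, hrankq]
    have hle : sInf {j | (p, i) ∈ M.dagSeq α j ∧ (p, i) ∉ M.dagSeq α (j + 1)} ≤ m :=
      le_trans (Nat.sInf_le ⟨hj'1, hj'2⟩) hj'm
    have hre : rondE ((r : ℕ∞)) = ((m : ℕ) : ℕ∞) := by
      have : ((r : ℕ∞)) = WithTop.some r := rfl
      rw [this]; show WithTop.map rondNat _ = _; rw [hmdef]
      rfl
    rw [hre]
    exact_mod_cast hle
  · have ht : M.rank α n (q, i) = ⊤ := by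
      rw [BA.rank, if_neg hqc]
    rw [ht]
    have : rondE (⊤ : ℕ∞) = ⊤ := rfl
    rw [this]
    exact le_top
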